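/- arXiv:1705.08065 — 2 statements merged into one kernel-verified Lean document; each statement's English description precedes it below -/
import Mathlib

section
/- For every θ > 0, the function u(z) = log(-(1/θ)·sinh(θ·log|z|)) is smooth on the punctured unit disk 𝔻₀ and satisfies Δu(z) = -θ²/(|z|²·sinh²(θ·log|z|)) = -1/(|z|²·h_θ(z)²) for all z ∈ 𝔻₀. (This is the statement that the model metric k_θ = diag(h_θ, h_θ⁻¹) is Hermitian–Einstein, i.e. F_{k_θ} + [φ, φ^{*_θ}] = 0, for the model Higgs field φ = [[0,0],[1/2,0]]·z⁻¹dz of Proposition 3.1.) -/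
open Real Complex Filter Topology Set

noncomputable section

/-- The punctured unit disk `𝔻₀ = {z : 0 < |z| < 1}`. -/
def puncturedDisk : Set ℂ := {z : ℂ | 0 < ‖z‖ ∧ ‖z‖ < 1}

/-- The Euclidean Laplacian `Δu = ∂²u/∂x² + ∂²u/∂y²` of a function on `ℂ ≅ ℝ²`. -/
def planarLaplacian (f : ℂ → ℝ) (z : ℂ) : ℝ :=
  deriv (fun x : ℝ => deriv (fun x' : ℝ => f ⟨x', z.im⟩) x) z.re +
  deriv (fun y : ℝ => deriv (fun y' : ℝ => f ⟨z.re, y'⟩) y) z.im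

/-- The model metric `h_θ(z) = -(1/θ)·sinh(θ·log|z|)` on the punctured disk. -/
def modelConeMetric (θ : ℝ) (z : ℂ) : ℝ :=
  -(1/θ) * Real.sinh (θ * Real.log (‖z‖))

/-- one-variable profile -/
def Uf (θ t : ℝ) : ℝ := Real.log (-(1/θ) * Real.sinh (θ/2 * Real.log t))

def Gf (θ t : ℝ) : ℝ :=
  θ * Real.cosh (θ/2 * Real.log t) / (t * Real.sinh (θ/2 * Real.log t))

def Gf' (θ t : ℝ) : ℝ :=
  (θ * (Real.sinh (θ/2 * Real.log t) * (θ/2 * t⁻¹)) * (t * Real.sinh (θ/2 * Real.log t))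
    - θ * Real.cosh (θ/2 * Real.log t) *
      (1 * Real.sinh (θ/2 * Real.log t) +
        t * (Real.cosh (θ/2 * Real.log t) * (θ/2 * t⁻¹))))
  / (t * Real.sinh (θ/2 * Real.log t))^2

lemma sinh_arg_neg {θ t : ℝ} (hθ : 0 < θ) (ht : t ∈ Ioo (0:ℝ) 1) :
    Real.sinh (θ/2 * Real.log t) < 0 := by
  rw [Real.sinh_neg_iff]
  have := Real.log_neg ht.1 ht.2
  nlinarith

lemma arg_pos {θ t : ℝ} (hθ : 0 < θ) (ht : t ∈ Ioo (0:ℝ) 1) :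
    0 < -(1/θ) * Real.sinh (θ/2 * Real.log t) := by
  have := sinh_arg_neg hθ ht
  have : Real.sinh (θ/2 * Real.log t) < 0 := this
  have h1 : 0 < 1/θ := by positivity
  nlinarith

lemma hasDerivAt_Uf {θ t : ℝ} (hθ : 0 < θ) (ht : t ∈ Ioo (0:ℝ) 1) :
    HasDerivAt (Uf θ) (Gf θ t / 2) t := by
  have ht0 : t ≠ 0 := ht.1.ne'
  have ha : HasDerivAt (fun t : ℝ => θ/2 * Real.log t) (θ/2 * t⁻¹) t :=
    (Real.hasDerivAt_log ht0).const_mul _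
  have hs : HasDerivAt (fun t : ℝ => Real.sinh (θ/2 * Real.log t))
      (Real.cosh (θ/2 * Real.log t) * (θ/2 * t⁻¹)) t := ha.sinh
  have hm : HasDerivAt (fun t : ℝ => -(1/θ) * Real.sinh (θ/2 * Real.log t))
      (-(1/θ) * (Real.cosh (θ/2 * Real.log t) * (θ/2 * t⁻¹))) t := hs.const_mul _
  have hU := hm.log (arg_pos hθ ht).ne'
  have hsne := (sinh_arg_neg hθ ht).ne
  have hval : Gf θ t / 2
      = -(1/θ) * (Real.cosh (θ/2 * Real.log t) * (θ/2 * t⁻¹))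
        / (-(1/θ) * Real.sinh (θ/2 * Real.log t)) := by
    rw [Gf, mul_div_mul_left _ _ (show -(1/θ) ≠ 0 from neg_ne_zero.mpr (by positivity))]
    field_simp [ht0, hsne]
  show HasDerivAt (fun t : ℝ => Real.log (-(1/θ) * Real.sinh (θ/2 * Real.log t)))
    (Gf θ t / 2) t
  rw [hval]; exact hU

lemma hasDerivAt_Gf {θ t : ℝ} (hθ : 0 < θ) (ht : t ∈ Ioo (0:ℝ) 1) :
    HasDerivAt (Gf θ) (Gf' θ t) t := by
  have ht0 : t ≠ 0 := ht.1.ne'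
  have hsne := (sinh_arg_neg hθ ht).ne
  have ha : HasDerivAt (fun t : ℝ => θ/2 * Real.log t) (θ/2 * t⁻¹) t :=
    (Real.hasDerivAt_log ht0).const_mul _
  have hN : HasDerivAt (fun t : ℝ => θ * Real.cosh (θ/2 * Real.log t))
      (θ * (Real.sinh (θ/2 * Real.log t) * (θ/2 * t⁻¹))) t := ha.cosh.const_mul _
  have hD : HasDerivAt (fun t : ℝ => t * Real.sinh (θ/2 * Real.log t))
      (1 * Real.sinh (θ/2 * Real.log t) +
        t * (Real.cosh (θ/2 * Real.log t) * (θ/2 * t⁻¹))) t :=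
    (hasDerivAt_id t).mul ha.sinh
  have hDne : t * Real.sinh (θ/2 * Real.log t) ≠ 0 := mul_ne_zero ht0 hsne
  have hdiv := hN.div hD hDne
  show HasDerivAt (fun t : ℝ => θ * Real.cosh (θ/2 * Real.log t)
      / (t * Real.sinh (θ/2 * Real.log t))) (Gf' θ t) t
  unfold Gf'
  exact hdiv

lemma inner_hasDerivAt {θ c w : ℝ} (hθ : 0 < θ) (hw : w^2 + c ∈ Ioo (0:ℝ) 1) :
    HasDerivAt (fun w' : ℝ => Uf θ (w'^2 + c)) (Gf θ (w^2 + c) * w) w := by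
  have hq : HasDerivAt (fun w' : ℝ => w'^2 + c) (2*w) w := by
    simpa using ((hasDerivAt_pow 2 w).add_const c)
  have h := (hasDerivAt_Uf hθ hw).comp w hq
  have hval : Gf θ (w^2 + c) * w = Gf θ (w^2 + c) / 2 * (2*w) := by ring
  rw [hval]; exact h

lemma secderiv {θ c x : ℝ} (hθ : 0 < θ) (ht : x^2 + c ∈ Ioo (0:ℝ) 1) :
    deriv (fun w : ℝ => deriv (fun w' : ℝ => Uf θ (w'^2 + c)) w) x
      = 2*x^2 * Gf' θ (x^2 + c) + Gf θ (x^2 + c) := by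
  have hopen : IsOpen {w : ℝ | w^2 + c ∈ Ioo (0:ℝ) 1} :=
    isOpen_Ioo.preimage (by continuity)
  have heq : (fun w : ℝ => deriv (fun w' : ℝ => Uf θ (w'^2 + c)) w)
      =ᶠ[𝓝 x] fun w => Gf θ (w^2 + c) * w := by
    filter_upwards [hopen.mem_nhds ht] with w hw
    exact (inner_hasDerivAt hθ hw).deriv
  rw [heq.deriv_eq]
  have hq : HasDerivAt (fun w' : ℝ => w'^2 + c) (2*x) x := by
    simpa using ((hasDerivAt_pow 2 x).add_const c)
  have hG : HasDerivAt (fun w : ℝ => Gf θ (w^2 + c)) (Gf' θ (x^2+c) * (2*x)) x :=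
    by have := (hasDerivAt_Gf hθ ht).comp x hq; exact this
  have hmul := hG.mul (hasDerivAt_id x)
  simp only [id_eq] at hmul
  rw [show deriv (fun w : ℝ => Gf θ (w^2 + c) * w) x = _ from hmul.deriv]
  ring

lemma sum_eq {θ t : ℝ} (hθ : 0 < θ) (ht : t ∈ Ioo (0:ℝ) 1) :
    2*t * Gf' θ t + 2 * Gf θ t = -θ^2 / (t * (Real.sinh (θ/2 * Real.log t))^2) := by
  have ht0 : t ≠ 0 := ht.1.ne'
  have hsne := (sinh_arg_neg hθ ht).ne
  have hc2 : Real.cosh (θ/2 * Real.log t)^2 = Real.sinh (θ/2 * Real.log t)^2 + 1 :=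
    Real.cosh_sq _
  rw [eq_div_iff (by positivity : t * (Real.sinh (θ/2 * Real.log t))^2 ≠ 0)]
  rw [Gf, Gf']
  set S := Real.sinh (θ/2 * Real.log t) with hS
  set C := Real.cosh (θ/2 * Real.log t) with hC
  field_simp [ht0]
  linear_combination (-θ) * hc2

/-- The function `u = log h_θ` is smooth on the punctured disk and satisfies
`Δu = -θ²/(|z|²·sinh²(θ log|z|)) = -1/(|z|²·h_θ²)`. -/
theorem stmt0 (θ : ℝ) (hθ : 0 < θ) :
    ContDiffOn ℝ (⊤ : ℕ∞) (fun z : ℂ => Real.log (modelConeMetric θ z)) puncturedDisk ∧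
    ∀ z ∈ puncturedDisk,
      planarLaplacian (fun z : ℂ => Real.log (modelConeMetric θ z)) z
        = -θ^2 / ((‖z‖)^2 * (Real.sinh (θ * Real.log (‖z‖)))^2) ∧
      planarLaplacian (fun z : ℂ => Real.log (modelConeMetric θ z)) z
        = -1 / ((‖z‖)^2 * (modelConeMetric θ z)^2) := by
  have habs : ∀ z : ℂ, ‖z‖ = Real.sqrt (z.re^2 + z.im^2) := by
    intro z; rw [Complex.norm_def, Complex.normSq_apply]; ring_nf
  have hfun : (fun z : ℂ => Real.log (modelConeMetric θ z))
      = fun z : ℂ => Uf θ (z.re^2 + z.im^2) := by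
    funext z
    rw [modelConeMetric, Uf, habs z, Real.log_sqrt (by positivity)]
    ring_nf
  have htmem : ∀ z ∈ puncturedDisk, z.re^2 + z.im^2 ∈ Ioo (0:ℝ) 1 := by
    intro z hz
    obtain ⟨h0, h1⟩ := hz
    have h2 : (‖z‖)^2 = z.re^2 + z.im^2 := by
      rw [Complex.sq_norm, Complex.normSq_apply]; ring
    constructor
    · rw [← h2]; exact pow_pos h0 2
    · rw [← h2]; nlinarith
  constructor
  · rw [hfun]
    intro z hz
    have ht := htmem z hz
    have harg := (arg_pos hθ ht).ne'
    have hUc : ContDiffAt ℝ (⊤ : ℕ∞) (Uf θ) (z.re^2 + z.im^2) := by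
      have hl : ContDiffAt ℝ (⊤ : ℕ∞) Real.log (z.re^2 + z.im^2) :=
        Real.contDiffAt_log.2 ht.1.ne'
      exact ((contDiffAt_const.mul ((contDiffAt_const.mul hl).sinh)).log harg)
    have hq : ContDiff ℝ (⊤ : ℕ∞) (fun z : ℂ => z.re^2 + z.im^2) :=
      (Complex.reCLM.contDiff.pow 2).add (Complex.imCLM.contDiff.pow 2)
    exact (hUc.comp z (hq.contDiffAt)).contDiffWithinAt
  · intro z hz
    have ht := htmem z hz
    have hsne : Real.sinh (θ/2 * Real.log (z.re^2 + z.im^2)) ≠ 0 :=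
      (sinh_arg_neg hθ ht).ne
    have h2 : (‖z‖)^2 = z.re^2 + z.im^2 := by
      rw [Complex.sq_norm, Complex.normSq_apply]; ring
    have hlog : θ * Real.log (‖z‖) = θ/2 * Real.log (z.re^2 + z.im^2) := by
      rw [habs z, Real.log_sqrt (by positivity)]; ring
    have hlap :
        planarLaplacian (fun z : ℂ => Real.log (modelConeMetric θ z)) z
          = -θ^2 / ((z.re^2 + z.im^2) * (Real.sinh (θ/2 * Real.log (z.re^2+z.im^2)))^2) := by
      rw [hfun, planarLaplacian]
      have e1 : (fun x' : ℝ => (fun z : ℂ => Uf θ (z.re^2 + z.im^2)) ⟨x', z.im⟩)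
          = fun x' : ℝ => Uf θ (x'^2 + z.im^2) := rfl
      have e2 : (fun y' : ℝ => (fun z : ℂ => Uf θ (z.re^2 + z.im^2)) ⟨z.re, y'⟩)
          = fun y' : ℝ => Uf θ (y'^2 + z.re^2) := by
        funext y'; simp only; rw [add_comm]
      rw [e1, e2]
      have ht2 : z.im^2 + z.re^2 ∈ Ioo (0:ℝ) 1 := by rwa [add_comm]
      rw [secderiv hθ ht, secderiv hθ ht2]
      rw [add_comm (z.im^2) (z.re^2)]
      have := sum_eq hθ ht
      linarith [this]
    refine ⟨?_, ?_⟩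
    · rw [hlap, h2, hlog]
    · rw [hlap, modelConeMetric, hlog, h2]
      field_simp
end
end

section
/- For every β ∈ ℝ and θ > 0, the function h_{β,θ}(z) = -(|z|^β/θ)·sinh(θ·log|z|) is positive and smooth on the punctured unit disk 𝔻₀, and u = log h_{β,θ} satisfies Δu(z) = -|z|^{2β-2}/h_{β,θ}(z)² for all z ∈ 𝔻₀. (This is the statement that the gauge-transformed model metric k_{β,θ} = diag(h_{β,θ}, h_{β,θ}⁻¹) of Section 3 is a harmonic (Hermitian–Einstein) metric for the Higgs field φ = [[0,0],[z^β/2,0]]·z⁻¹dz.) -/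
open Real Complex Filter Topology Set

noncomputable section

/-- The gauge-transformed model metric `h_{β,θ}(z) = -(|z|^β/θ)·sinh(θ·log|z|)`. -/
def twistedConeMetric (β θ : ℝ) (z : ℂ) : ℝ :=
  -((‖z‖) ^ β / θ) * Real.sinh (θ * Real.log (‖z‖))

/-- F -/
def Fa (β θ t : ℝ) : ℝ := β * t / 2 + Real.log (Real.sinh (θ * -t / 2)) - Real.log θ
def F1 (β θ t : ℝ) : ℝ := β / 2 - (θ / 2) * (Real.cosh (θ * -t / 2) / Real.sinh (θ * -t / 2))
def F2 (β θ t : ℝ) : ℝ := -(θ^2/4) / (Real.sinh (θ * -t / 2))^2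

lemma sinh_arg_pos {θ t : ℝ} (hθ : 0 < θ) (ht : t < 0) : 0 < Real.sinh (θ * -t / 2) :=
  Real.sinh_pos_iff.2 (by have := neg_pos.2 ht; positivity)

lemma hasDerivAt_Fa {β θ : ℝ} (hθ : 0 < θ) {t : ℝ} (ht : t < 0) :
    HasDerivAt (Fa β θ) (F1 β θ t) t := by
  have hs : HasDerivAt (fun t : ℝ => θ * -t / 2) (-θ/2) t := by
    simpa using (((hasDerivAt_id t).neg.const_mul θ).div_const 2)
  have hsinh : HasDerivAt (fun t : ℝ => Real.sinh (θ * -t / 2))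
      (Real.cosh (θ * -t / 2) * (-θ/2)) t := (Real.hasDerivAt_sinh _).comp t hs
  have hpos := sinh_arg_pos hθ ht
  have hlog : HasDerivAt (fun t : ℝ => Real.log (Real.sinh (θ * -t / 2)))
      ((Real.sinh (θ * -t / 2))⁻¹ * (Real.cosh (θ * -t / 2) * (-θ/2))) t :=
    by have := (Real.hasDerivAt_log hpos.ne').comp t hsinh; exact this
  have hlin : HasDerivAt (fun t : ℝ => β * t / 2) (β/2) t := by
    simpa using ((hasDerivAt_id t).const_mul β).div_const 2
  have := (hlin.fun_add hlog).sub_const (Real.log θ)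
  refine this.congr_deriv ?_
  symm
  unfold F1
  field_simp
  ring

lemma hasDerivAt_F1 {β θ : ℝ} (hθ : 0 < θ) {t : ℝ} (ht : t < 0) :
    HasDerivAt (F1 β θ) (F2 β θ t) t := by
  have hs : HasDerivAt (fun t : ℝ => θ * -t / 2) (-θ/2) t := by
    simpa using (((hasDerivAt_id t).neg.const_mul θ).div_const 2)
  have hcosh : HasDerivAt (fun t : ℝ => Real.cosh (θ * -t / 2))
      (Real.sinh (θ * -t / 2) * (-θ/2)) t := (Real.hasDerivAt_cosh _).comp t hs
  have hsinh : HasDerivAt (fun t : ℝ => Real.sinh (θ * -t / 2))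
      (Real.cosh (θ * -t / 2) * (-θ/2)) t := (Real.hasDerivAt_sinh _).comp t hs
  have hpos := sinh_arg_pos hθ ht
  have hdiv := hcosh.div hsinh hpos.ne'
  have := ((hdiv.const_mul (θ/2)).fun_neg.const_add (β/2))
  refine this.congr_deriv ?_
  symm
  unfold F2
  set S := Real.sinh (θ * -t / 2)
  set C := Real.cosh (θ * -t / 2)
  have hid : C^2 - S^2 = 1 := Real.cosh_sq_sub_sinh_sq _
  have key : S * (-θ / 2) * S - C * (C * (-θ / 2)) = θ/2 := by linear_combination (θ/2) * hid
  rw [key]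
  field_simp
  ring

lemma tcm_eq {β θ : ℝ} (z : ℂ) :
    twistedConeMetric β θ z =
      ((‖z‖) ^ β / θ) * Real.sinh (-(θ * Real.log (‖z‖))) := by
  rw [Real.sinh_neg]; unfold twistedConeMetric; ring

lemma tcm_pos {β θ : ℝ} (hθ : 0 < θ) {z : ℂ} (h0 : 0 < ‖z‖)
    (h1 : ‖z‖ < 1) : 0 < twistedConeMetric β θ z := by
  rw [tcm_eq]
  have hlr : Real.log (‖z‖) < 0 := Real.log_neg h0 h1
  have hS : 0 < Real.sinh (-(θ * Real.log (‖z‖))) :=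
    Real.sinh_pos_iff.2 (by nlinarith)
  have : 0 < (‖z‖) ^ β / θ := div_pos (Real.rpow_pos_of_pos h0 β) hθ
  exact mul_pos this hS

lemma log_tcm {β θ : ℝ} (hθ : 0 < θ) {z : ℂ} (h0 : 0 < ‖z‖)
    (h1 : ‖z‖ < 1) :
    Real.log (twistedConeMetric β θ z) = Fa β θ (Real.log (Complex.normSq z)) := by
  set r := ‖z‖ with hr
  have hlr : Real.log r < 0 := Real.log_neg h0 h1
  have hS : 0 < Real.sinh (-(θ * Real.log r)) := Real.sinh_pos_iff.2 (by nlinarith)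
  have hns : Real.log (Complex.normSq z) = 2 * Real.log r := by
    rw [← Complex.sq_norm, Real.log_pow]; push_cast; ring
  rw [tcm_eq, Real.log_mul (by positivity) hS.ne', Real.log_div (by positivity) hθ.ne',
    Real.log_rpow h0, hns]
  unfold Fa
  have harg : θ * -(2 * Real.log r) / 2 = -(θ * Real.log r) := by ring
  rw [harg]
  ring

lemma line_first_deriv {β θ : ℝ} (hθ : 0 < θ) (c : ℝ) {s : ℝ}
    (h0 : 0 < s^2 + c) (h1 : s^2 + c < 1) :
    HasDerivAt (fun s' : ℝ => Fa β θ (Real.log (s'^2 + c)))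
      (F1 β θ (Real.log (s^2 + c)) * ((s^2+c)⁻¹ * (2*s))) s := by
  have hq : HasDerivAt (fun s' : ℝ => s'^2 + c) (2*s) s := by
    simpa using ((hasDerivAt_pow 2 s).add_const c)
  have hlog : HasDerivAt (fun s' : ℝ => Real.log (s'^2 + c)) ((s^2+c)⁻¹ * (2*s)) s :=
    by have := (Real.hasDerivAt_log h0.ne').comp s hq; exact this
  exact (hasDerivAt_Fa hθ (Real.log_neg h0 h1)).comp s hlog

lemma line_second_deriv {β θ : ℝ} (hθ : 0 < θ) (c : ℝ) (g : ℝ → ℝ)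
    (hg : ∀ s : ℝ, 0 < s^2 + c → s^2 + c < 1 → g s = Fa β θ (Real.log (s^2 + c)))
    {s : ℝ} (h0 : 0 < s^2 + c) (h1 : s^2 + c < 1) :
    deriv (fun s' : ℝ => deriv g s') s
      = F2 β θ (Real.log (s^2+c)) * (2*s/(s^2+c))^2
        + F1 β θ (Real.log (s^2+c)) * (2/(s^2+c) - (2*s)*(2*s)/(s^2+c)^2) := by
  set U : Set ℝ := {s' : ℝ | 0 < s'^2 + c ∧ s'^2 + c < 1} with hU
  have hUopen : IsOpen U := by
    have hcont : Continuous fun s' : ℝ => s'^2 + c := by continuity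
    have : U = (fun s' : ℝ => s'^2 + c) ⁻¹' (Set.Ioo 0 1) := by
      ext s'; simp [hU, Set.mem_Ioo]
    rw [this]; exact isOpen_Ioo.preimage hcont
  have hmem : ∀ s' ∈ U, HasDerivAt g
      (F1 β θ (Real.log (s'^2+c)) * ((s'^2+c)⁻¹ * (2*s'))) s' := by
    intro s' hs'
    have hd := line_first_deriv (β := β) hθ c hs'.1 hs'.2
    refine hd.congr_of_eventuallyEq ?_
    filter_upwards [hUopen.mem_nhds hs'] with a ha
    exact hg a ha.1 ha.2
  -- deriv g agrees with the closed formula near s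
  have hev : (fun s' => deriv g s') =ᶠ[nhds s]
      (fun s' => F1 β θ (Real.log (s'^2+c)) * ((s'^2+c)⁻¹ * (2*s'))) := by
    filter_upwards [hUopen.mem_nhds ⟨h0, h1⟩] with a ha
    exact (hmem a ha).deriv
  rw [hev.deriv_eq]
  -- now differentiate the closed formula
  have hq : HasDerivAt (fun s' : ℝ => s'^2 + c) (2*s) s := by
    simpa using ((hasDerivAt_pow 2 s).add_const c)
  have hlog : HasDerivAt (fun s' : ℝ => Real.log (s'^2 + c)) ((s^2+c)⁻¹ * (2*s)) s :=
    by have := (Real.hasDerivAt_log h0.ne').comp s hq; exact this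
  have hA : HasDerivAt (fun s' : ℝ => F1 β θ (Real.log (s'^2+c)))
      (F2 β θ (Real.log (s^2+c)) * ((s^2+c)⁻¹ * (2*s))) s :=
    by have := (hasDerivAt_F1 (β := β) hθ (Real.log_neg h0 h1)).comp s hlog; exact this
  have hB : HasDerivAt (fun s' : ℝ => (s'^2+c)⁻¹ * (2*s'))
      (-(2*s) / (s^2+c)^2 * (2*s) + (s^2+c)⁻¹ * 2) s := by
    have hinv : HasDerivAt (fun s' : ℝ => (s'^2+c)⁻¹) (-(2*s) / (s^2+c)^2) s := hq.inv h0.ne'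
    have h2 : HasDerivAt (fun s' : ℝ => 2*s') (2 : ℝ) s := by
      simpa using (hasDerivAt_id s).const_mul 2
    simpa using hinv.fun_mul h2
  have := (hA.fun_mul hB).deriv
  rw [this]
  have hqne : (s^2+c) ≠ 0 := h0.ne'
  field_simp
  ring

lemma contDiff_normSq' : ContDiff ℝ (⊤ : ℕ∞) (fun z : ℂ => Complex.normSq z) := by
  have : (fun z : ℂ => Complex.normSq z) = fun z : ℂ => z.re * z.re + z.im * z.im := by
    funext z; exact Complex.normSq_apply z
  rw [this]
  exact (Complex.reCLM.contDiff.mul Complex.reCLM.contDiff).add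
    (Complex.imCLM.contDiff.mul Complex.imCLM.contDiff)

lemma tcm_eq_H {β θ : ℝ} {z : ℂ} (h0 : 0 < ‖z‖) :
    twistedConeMetric β θ z
      = -((Complex.normSq z) ^ (β/2) / θ) * Real.sinh (θ * (Real.log (Complex.normSq z) / 2)) := by
  set r := ‖z‖
  have hns : Complex.normSq z = r ^ 2 := (Complex.sq_norm z).symm
  have h1 : (Complex.normSq z) ^ (β/2) = r ^ β := by
    rw [hns, ← Real.rpow_natCast r 2, ← Real.rpow_mul h0.le]
    norm_num
    ring_nf
  have h2 : Real.log (Complex.normSq z) / 2 = Real.log r := by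
    rw [hns, Real.log_pow]; push_cast; ring
  rw [h1, h2]; rfl

lemma tcm_contDiffAt {β θ : ℝ} {z : ℂ} (h0 : 0 < ‖z‖) :
    ContDiffAt ℝ (⊤ : ℕ∞) (twistedConeMetric β θ) z := by
  have hq : 0 < Complex.normSq z := by
    rw [← Complex.sq_norm]; positivity
  have hH : ContDiffAt ℝ (⊤ : ℕ∞)
      (fun q : ℝ => -(q ^ (β/2) / θ) * Real.sinh (θ * (Real.log q / 2)))
      (Complex.normSq z) := by
    have h1 : ContDiffAt ℝ (⊤ : ℕ∞) (fun q : ℝ => q ^ (β/2)) (Complex.normSq z) :=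
      Real.contDiffAt_rpow_const_of_ne hq.ne'
    have h2 : ContDiffAt ℝ (⊤ : ℕ∞) (fun q : ℝ => Real.sinh (θ * (Real.log q / 2)))
        (Complex.normSq z) :=
      Real.contDiff_sinh.contDiffAt.comp _
        ((((contDiffAt_log.2 hq.ne').div_const 2).const_smul θ).congr_of_eventuallyEq
          (by filter_upwards with a; simp [smul_eq_mul]))
    exact ((h1.div_const θ).neg.mul h2)
  have := hH.comp z (contDiff_normSq'.contDiffAt)
  refine this.congr_of_eventuallyEq ?_
  have hopen : IsOpen {w : ℂ | 0 < ‖w‖} := by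
    have : {w : ℂ | 0 < ‖w‖} = {(0:ℂ)}ᶜ := by
      ext w; simp [norm_pos_iff]
    rw [this]; exact isOpen_compl_singleton
  filter_upwards [hopen.mem_nhds h0] with w hw
  exact tcm_eq_H hw

lemma laplacian_log_tcm (β θ : ℝ) (hθ : 0 < θ) (z : ℂ) (h0 : 0 < ‖z‖) (h1 : ‖z‖ < 1) :
    (deriv (fun x : ℝ => deriv (fun x' : ℝ => (fun z : ℂ => Real.log (twistedConeMetric β θ z)) ⟨x', z.im⟩) x) z.re +
     deriv (fun y : ℝ => deriv (fun y' : ℝ => (fun z : ℂ => Real.log (twistedConeMetric β θ z)) ⟨z.re, y'⟩) y) z.im)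
      = -(‖z‖) ^ (2 * β - 2) / (twistedConeMetric β θ z)^2 := by
  set x := z.re with hx'
  set y := z.im with hy'
  set r := ‖z‖ with hr
  have hq2 : r ^ 2 = x^2 + y^2 := by
    rw [hr, Complex.sq_norm, Complex.normSq_apply]; ring
  have hq0 : 0 < x^2 + y^2 := by rw [← hq2]; positivity
  have hq1 : x^2 + y^2 < 1 := by nlinarith
  have hmk : ∀ a b : ℝ, 0 < a^2+b^2 → a^2+b^2 < 1 →
      Real.log (twistedConeMetric β θ ⟨a,b⟩) = Fa β θ (Real.log (a^2+b^2)) := by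
    intro a b ha hb
    have habs2 : (‖(⟨a,b⟩ : ℂ)‖)^2 = a^2+b^2 := by
      rw [Complex.sq_norm, Complex.normSq_mk]; ring
    have habs0 : 0 < ‖(⟨a,b⟩ : ℂ)‖ := by
      rcases (norm_nonneg (⟨a,b⟩ : ℂ)).lt_or_eq with h | h
      · exact h
      · exfalso; nlinarith
    have habs1 : ‖(⟨a,b⟩ : ℂ)‖ < 1 := by nlinarith
    rw [log_tcm hθ habs0 habs1]
    congr 2
    rw [← habs2, Complex.sq_norm]
  have hgx : ∀ s : ℝ, 0 < s^2 + y^2 → s^2 + y^2 < 1 →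
      (fun x' : ℝ => Real.log (twistedConeMetric β θ ⟨x', y⟩)) s
        = Fa β θ (Real.log (s^2 + y^2)) := fun s hs1 hs2 => hmk s y hs1 hs2
  have hgy : ∀ s : ℝ, 0 < s^2 + x^2 → s^2 + x^2 < 1 →
      (fun y' : ℝ => Real.log (twistedConeMetric β θ ⟨x, y'⟩)) s
        = Fa β θ (Real.log (s^2 + x^2)) := by
    intro s hs1 hs2
    have := hmk x s (by nlinarith) (by nlinarith)
    simpa [add_comm] using this
  have hq0' : (0:ℝ) < y^2 + x^2 := by nlinarith
  have hq1' : y^2 + x^2 < 1 := by nlinarith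
  have hX := line_second_deriv hθ (y^2)
      (fun x' : ℝ => Real.log (twistedConeMetric β θ ⟨x', y⟩)) hgx hq0 hq1
  have hY := line_second_deriv hθ (x^2)
      (fun y' : ℝ => Real.log (twistedConeMetric β θ ⟨x, y'⟩)) hgy hq0' hq1'
  rw [hX, hY]
  have hcomm : y^2 + x^2 = x^2 + y^2 := by ring
  rw [hcomm]
  set q := x^2 + y^2 with hqdef
  set L := Real.log q with hL
  -- now pure algebra
  have hlr : Real.log r < 0 := Real.log_neg h0 h1
  have hLr : L = 2 * Real.log r := by
    rw [hL, ← hq2, Real.log_pow]; push_cast; ring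
  have hargeq : θ * -L / 2 = -(θ * Real.log r) := by rw [hLr]; ring
  have hS : Real.sinh (θ * -L / 2) = -Real.sinh (θ * Real.log r) := by
    rw [hargeq, Real.sinh_neg]
  have hsne : Real.sinh (θ * Real.log r) ≠ 0 := by
    have : Real.sinh (θ * Real.log r) < 0 := by
      rw [← Real.sinh_zero]
      exact Real.sinh_lt_sinh.2 (by nlinarith)
    exact this.ne
  have hrpow : r ^ (2*β-2) * r^2 = (r^β)^2 := by
    rw [← Real.rpow_natCast r 2, ← Real.rpow_add h0, ← Real.rpow_natCast (r^β) 2,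
      ← Real.rpow_mul h0.le]
    norm_num
    ring_nf
  have hrbne : r ^ β ≠ 0 := (Real.rpow_pos_of_pos h0 β).ne'
  have hqne : q ≠ 0 := hq0.ne'
  have hstep : F2 β θ L * (2 * x / q) ^ 2 + F1 β θ L * (2 / q - 2 * x * (2 * x) / q ^ 2)
      + (F2 β θ L * (2 * y / q) ^ 2 + F1 β θ L * (2 / q - 2 * y * (2 * y) / q ^ 2))
      = 4 * F2 β θ L / q := by
    rw [hqdef]
    have hne : x^2 + y^2 ≠ 0 := hq0.ne'
    field_simp
    ring
  rw [hstep]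
  have hr2b : r ^ (2*β-2) = (r^β)^2 / q := by
    rw [eq_div_iff hqne, ← hq2]; exact hrpow
  rw [hr2b]
  unfold F2 twistedConeMetric
  rw [hS, ← hr]
  field_simp


/-- For every `β ∈ ℝ` and `θ > 0`, `h_{β,θ}` is positive and smooth on `𝔻₀`, and
`u = log h_{β,θ}` satisfies `Δu = -|z|^{2β-2}/h_{β,θ}²`: the metric
`k_{β,θ} = diag(h_{β,θ}, h_{β,θ}⁻¹)` is Hermitian–Einstein for the Higgs field
`φ = [[0,0],[z^β/2,0]]·z⁻¹dz`. -/


theorem stmt17 (β θ : ℝ) (hθ : 0 < θ) :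
    (∀ z ∈ puncturedDisk, 0 < twistedConeMetric β θ z) ∧
    ContDiffOn ℝ (⊤ : ℕ∞) (twistedConeMetric β θ) puncturedDisk ∧
    ∀ z ∈ puncturedDisk,
      planarLaplacian (fun z : ℂ => Real.log (twistedConeMetric β θ z)) z
        = -(‖z‖) ^ (2 * β - 2) / (twistedConeMetric β θ z)^2 := by
  refine ⟨fun z hz => tcm_pos hθ hz.1 hz.2,
    fun z hz => (tcm_contDiffAt hz.1).contDiffWithinAt, fun z hz => ?_⟩
  have := laplacian_log_tcm β θ hθ z hz.1 hz.2
  simpa [planarLaplacian] using this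
end
end
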